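/- Let Z be a standard Gumbel random variable and Θ = -log|N| with N standard normal, Z and Θ independent. Then Z/2 + Θ has the same distribution as Z + (log 2)/2. -/

import Mathlib

open Real MeasureTheory Set

section glasser
variable {a : ℝ}
section glasser
variable {a : ℝ}

lemma abs_lt_sqrtaux (ha : 0 < a) (u : ℝ) : |u| < Real.sqrt (u^2 + 4*a) := by
  rw [← Real.sqrt_sq_eq_abs]
  exact Real.sqrt_lt_sqrt (sq_nonneg u) (by linarith)

lemma sqrtaux_pos (ha : 0 < a) (u : ℝ) : 0 < Real.sqrt (u^2 + 4*a) :=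
  lt_of_le_of_lt (abs_nonneg u) (abs_lt_sqrtaux ha u)

lemma sq_sqrtaux (ha : 0 < a) (u : ℝ) : (Real.sqrt (u^2 + 4*a))^2 = u^2 + 4*a :=
  Real.sq_sqrt (by positivity)

noncomputable def psiP (a u : ℝ) : ℝ := (u + Real.sqrt (u^2 + 4*a)) / 2
noncomputable def psiM (a u : ℝ) : ℝ := (u - Real.sqrt (u^2 + 4*a)) / 2

lemma psiP_pos (ha : 0 < a) (u : ℝ) : 0 < psiP a u := by
  have := abs_lt_sqrtaux ha u
  have := neg_abs_le u
  unfold psiP; nlinarith [abs_nonneg u]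

lemma psiM_neg (ha : 0 < a) (u : ℝ) : psiM a u < 0 := by
  have := abs_lt_sqrtaux ha u
  have := le_abs_self u
  unfold psiM; nlinarith

lemma psiP_left_inv (ha : 0 < a) (u : ℝ) : psiP a u - a / psiP a u = u := by
  have hs := sq_sqrtaux ha u
  have hp := psiP_pos ha u
  have key : psiP a u * (psiP a u - u) = a := by unfold psiP at *; nlinarith
  have : a / psiP a u = psiP a u - u := by
    rw [div_eq_iff hp.ne']; linear_combination -key
  rw [this]; ring

lemma psiM_left_inv (ha : 0 < a) (u : ℝ) : psiM a u - a / psiM a u = u := by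
  have hs := sq_sqrtaux ha u
  have hm := psiM_neg ha u
  have key : psiM a u * (psiM a u - u) = a := by unfold psiM at *; nlinarith
  have : a / psiM a u = psiM a u - u := by
    rw [div_eq_iff hm.ne]; linear_combination -key
  rw [this]; ring

lemma psiP_surj (ha : 0 < a) {t : ℝ} (ht : 0 < t) : psiP a (t - a/t) = t := by
  have h1 : (t - a/t)^2 + 4*a = (t + a/t)^2 := by field_simp; ring
  have h2 : 0 < t + a/t := by positivity
  unfold psiP; rw [h1, Real.sqrt_sq h2.le]; ring

lemma psiM_surj (ha : 0 < a) {t : ℝ} (ht : t < 0) : psiM a (t - a/t) = t := by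
  have h1 : (t - a/t)^2 + 4*a = (t + a/t)^2 := by
    have : t ≠ 0 := ht.ne
    field_simp; ring
  have h2 : t + a/t < 0 := by
    have : a / t < 0 := div_neg_of_pos_of_neg ha ht
    linarith
  unfold psiM
  rw [h1, Real.sqrt_sq_eq_abs, abs_of_neg h2]; ring

lemma hasDerivAt_psiP (ha : 0 < a) (u : ℝ) :
    HasDerivAt (psiP a) ((1 + u / Real.sqrt (u^2 + 4*a)) / 2) u := by
  have h0 : (u:ℝ)^2 + 4*a ≠ 0 := by positivity
  have h1 : HasDerivAt (fun u : ℝ => u^2 + 4*a) (2*u) u := by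
    simpa [mul_comm] using ((hasDerivAt_pow 2 u).add_const (4*a))
  have h2 := h1.sqrt h0
  have h3 := ((hasDerivAt_id u).add h2).div_const 2
  refine h3.congr_deriv ?_
  have hs := (sqrtaux_pos ha u).ne'
  field_simp

lemma hasDerivAt_psiM (ha : 0 < a) (u : ℝ) :
    HasDerivAt (psiM a) ((1 - u / Real.sqrt (u^2 + 4*a)) / 2) u := by
  have h0 : (u:ℝ)^2 + 4*a ≠ 0 := by positivity
  have h1 : HasDerivAt (fun u : ℝ => u^2 + 4*a) (2*u) u := by
    simpa [mul_comm] using ((hasDerivAt_pow 2 u).add_const (4*a))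
  have h2 := h1.sqrt h0
  have h3 := ((hasDerivAt_id u).sub h2).div_const 2
  refine h3.congr_deriv ?_
  have hs := (sqrtaux_pos ha u).ne'
  field_simp

lemma derivP_nonneg (ha : 0 < a) (u : ℝ) : 0 ≤ (1 + u / Real.sqrt (u^2 + 4*a)) / 2 := by
  have h1 := abs_lt_sqrtaux ha u
  have h2 := sqrtaux_pos ha u
  have : -1 ≤ u / Real.sqrt (u^2 + 4*a) := by
    rw [le_div_iff₀ h2]; linarith [neg_abs_le u]
  linarith

lemma derivP_le_one (ha : 0 < a) (u : ℝ) : (1 + u / Real.sqrt (u^2 + 4*a)) / 2 ≤ 1 := by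
  have h1 := abs_lt_sqrtaux ha u
  have h2 := sqrtaux_pos ha u
  have : u / Real.sqrt (u^2 + 4*a) ≤ 1 := by
    rw [div_le_one h2]; linarith [le_abs_self u]
  linarith

lemma derivM_nonneg (ha : 0 < a) (u : ℝ) : 0 ≤ (1 - u / Real.sqrt (u^2 + 4*a)) / 2 := by
  have h1 := abs_lt_sqrtaux ha u
  have h2 := sqrtaux_pos ha u
  have : u / Real.sqrt (u^2 + 4*a) ≤ 1 := by
    rw [div_le_one h2]; linarith [le_abs_self u]
  linarith

lemma derivM_le_one (ha : 0 < a) (u : ℝ) : (1 - u / Real.sqrt (u^2 + 4*a)) / 2 ≤ 1 := by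
  have h1 := abs_lt_sqrtaux ha u
  have h2 := sqrtaux_pos ha u
  have : -1 ≤ u / Real.sqrt (u^2 + 4*a) := by
    rw [le_div_iff₀ h2]; linarith [neg_abs_le u]
  linarith

lemma psiP_image (ha : 0 < a) : psiP a '' univ = Ioi 0 := by
  apply Subset.antisymm
  · rintro t ⟨u, -, rfl⟩; exact psiP_pos ha u
  · rintro t (ht : 0 < t); exact ⟨t - a/t, trivial, psiP_surj ha ht⟩

lemma psiM_image (ha : 0 < a) : psiM a '' univ = Iio 0 := by
  apply Subset.antisymm
  · rintro t ⟨u, -, rfl⟩; exact psiM_neg ha u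
  · rintro t (ht : t < 0); exact ⟨t - a/t, trivial, psiM_surj ha ht⟩

lemma psiP_inj (ha : 0 < a) : Function.Injective (psiP a) :=
  Function.LeftInverse.injective (g := fun t => t - a/t) (psiP_left_inv ha)

lemma psiM_inj (ha : 0 < a) : Function.Injective (psiM a) :=
  Function.LeftInverse.injective (g := fun t => t - a/t) (psiM_left_inv ha)

end glasser

noncomputable def gg (a t : ℝ) : ℝ := Real.exp (-(t - a/t)^2/2)

lemma contDerivP (ha : 0 < a) :
    Continuous (fun u : ℝ => (1 + u / Real.sqrt (u^2 + 4*a))/2 * Real.exp (-u^2/2)) := by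
  have hs : Continuous (fun u : ℝ => Real.sqrt (u^2 + 4*a)) :=
    Real.continuous_sqrt.comp (by continuity)
  have : Continuous (fun u : ℝ => u / Real.sqrt (u^2 + 4*a)) :=
    continuous_id.div hs (fun u => (sqrtaux_pos ha u).ne')
  continuity

lemma contDerivM (ha : 0 < a) :
    Continuous (fun u : ℝ => (1 - u / Real.sqrt (u^2 + 4*a))/2 * Real.exp (-u^2/2)) := by
  have hs : Continuous (fun u : ℝ => Real.sqrt (u^2 + 4*a)) :=
    Real.continuous_sqrt.comp (by continuity)
  have : Continuous (fun u : ℝ => u / Real.sqrt (u^2 + 4*a)) :=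
    continuous_id.div hs (fun u => (sqrtaux_pos ha u).ne')
  continuity

lemma gauss_int : ∫ u : ℝ, Real.exp (-u^2/2) = Real.sqrt (2*π) := by
  have : ∀ u : ℝ, Real.exp (-u^2/2) = Real.exp (-(1/2) * u^2) := fun u => by ring_nf
  rw [funext this, integral_gaussian]
  rw [show π / (1/2) = 2 * π by ring]

lemma intDerivP (ha : 0 < a) :
    Integrable (fun u : ℝ => (1 + u / Real.sqrt (u^2 + 4*a))/2 * Real.exp (-u^2/2)) := by
  refine (integrable_exp_neg_mul_sq (by norm_num : (0:ℝ) < 1/2)).mono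
    (contDerivP ha).aestronglyMeasurable (ae_of_all _ fun u => ?_)
  have h1 := derivP_nonneg ha u
  have h2 := derivP_le_one ha u
  have h3 : (0:ℝ) < Real.exp (-u^2/2) := Real.exp_pos _
  rw [Real.norm_eq_abs, Real.norm_eq_abs, abs_of_nonneg (by positivity),
    abs_of_nonneg (Real.exp_pos _).le, show -(1/2 : ℝ) * u^2 = -u^2/2 by ring]
  nlinarith

lemma intDerivM (ha : 0 < a) :
    Integrable (fun u : ℝ => (1 - u / Real.sqrt (u^2 + 4*a))/2 * Real.exp (-u^2/2)) := by
  refine (integrable_exp_neg_mul_sq (by norm_num : (0:ℝ) < 1/2)).mono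
    (contDerivM ha).aestronglyMeasurable (ae_of_all _ fun u => ?_)
  have h1 := derivM_nonneg ha u
  have h2 := derivM_le_one ha u
  have h3 : (0:ℝ) < Real.exp (-u^2/2) := Real.exp_pos _
  rw [Real.norm_eq_abs, Real.norm_eq_abs, abs_of_nonneg (by positivity),
    abs_of_nonneg (Real.exp_pos _).le, show -(1/2 : ℝ) * u^2 = -u^2/2 by ring]
  nlinarith

lemma ggP_eq (ha : 0 < a) (u : ℝ) : gg a (psiP a u) = Real.exp (-u^2/2) := by
  unfold gg; rw [psiP_left_inv ha]

lemma ggM_eq (ha : 0 < a) (u : ℝ) : gg a (psiM a u) = Real.exp (-u^2/2) := by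
  unfold gg; rw [psiM_left_inv ha]

lemma integral_gg_Ioi (ha : 0 < a) :
    ∫ t in Ioi (0:ℝ), gg a t
      = ∫ u : ℝ, (1 + u / Real.sqrt (u^2 + 4*a))/2 * Real.exp (-u^2/2) := by
  rw [← psiP_image ha,
    integral_image_eq_integral_abs_deriv_smul MeasurableSet.univ
      (fun u _ => (hasDerivAt_psiP ha u).hasDerivWithinAt) ((psiP_inj ha).injOn) (gg a)]
  rw [setIntegral_univ]
  congr 1; funext u
  rw [ggP_eq ha, abs_of_nonneg (derivP_nonneg ha u), smul_eq_mul]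

lemma integral_gg_Iio (ha : 0 < a) :
    ∫ t in Iio (0:ℝ), gg a t
      = ∫ u : ℝ, (1 - u / Real.sqrt (u^2 + 4*a))/2 * Real.exp (-u^2/2) := by
  rw [← psiM_image ha,
    integral_image_eq_integral_abs_deriv_smul MeasurableSet.univ
      (fun u _ => (hasDerivAt_psiM ha u).hasDerivWithinAt) ((psiM_inj ha).injOn) (gg a)]
  rw [setIntegral_univ]
  congr 1; funext u
  rw [ggM_eq ha, abs_of_nonneg (derivM_nonneg ha u), smul_eq_mul]

lemma integrableOn_gg_Ioi (ha : 0 < a) : IntegrableOn (gg a) (Ioi (0:ℝ)) := by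
  rw [← psiP_image ha,
    integrableOn_image_iff_integrableOn_abs_deriv_smul MeasurableSet.univ
      (fun u _ => (hasDerivAt_psiP ha u).hasDerivWithinAt) ((psiP_inj ha).injOn) (gg a)]
  rw [integrableOn_univ]
  have : (fun u : ℝ => |(1 + u / Real.sqrt (u^2 + 4*a))/2| • gg a (psiP a u))
      = fun u : ℝ => (1 + u / Real.sqrt (u^2 + 4*a))/2 * Real.exp (-u^2/2) := by
    funext u; rw [ggP_eq ha, abs_of_nonneg (derivP_nonneg ha u), smul_eq_mul]
  rw [this]; exact intDerivP ha

lemma integrableOn_gg_Iio (ha : 0 < a) : IntegrableOn (gg a) (Iio (0:ℝ)) := by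
  rw [← psiM_image ha,
    integrableOn_image_iff_integrableOn_abs_deriv_smul MeasurableSet.univ
      (fun u _ => (hasDerivAt_psiM ha u).hasDerivWithinAt) ((psiM_inj ha).injOn) (gg a)]
  rw [integrableOn_univ]
  have : (fun u : ℝ => |(1 - u / Real.sqrt (u^2 + 4*a))/2| • gg a (psiM a u))
      = fun u : ℝ => (1 - u / Real.sqrt (u^2 + 4*a))/2 * Real.exp (-u^2/2) := by
    funext u; rw [ggM_eq ha, abs_of_nonneg (derivM_nonneg ha u), smul_eq_mul]
  rw [this]; exact intDerivM ha

lemma integral_gg (ha : 0 < a) : ∫ t : ℝ, gg a t = Real.sqrt (2*π) := by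
  have hIic : IntegrableOn (gg a) (Iic (0:ℝ)) :=
    (integrableOn_gg_Iio ha).congr_set_ae Iio_ae_eq_Iic.symm
  rw [← intervalIntegral.integral_Iic_add_Ioi hIic (integrableOn_gg_Ioi ha)]
  rw [← setIntegral_congr_set Iio_ae_eq_Iic]
  rw [integral_gg_Iio ha, integral_gg_Ioi ha,
    ← integral_add (intDerivM ha) (intDerivP ha)]
  rw [← gauss_int]
  congr 1; funext u; ring

lemma key_integral (ha : 0 < a) :
    ∫ t : ℝ, Real.exp (-(t^2/2) - a^2/(2*t^2)) = Real.sqrt (2*π) * Real.exp (-a) := by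
  have h0 : ∀ᵐ t : ℝ, t ≠ 0 := by
    rw [ae_iff]
    convert Real.volume_singleton (a := 0) using 2
    ext t; simp
  have hae : (fun t : ℝ => Real.exp (-(t^2/2) - a^2/(2*t^2)))
      =ᵐ[volume] fun t => Real.exp (-a) * gg a t := by
    filter_upwards [h0] with t ht
    unfold gg
    rw [← Real.exp_add]
    congr 1
    field_simp
    ring
  rw [integral_congr_ae hae, integral_const_mul, integral_gg ha]
  ring

end glasser

open ProbabilityTheory

lemma integrable_gauss_factor {a : ℝ} (ha : 0 < a) :
    Integrable (fun n : ℝ => gaussianPDFReal 0 1 n * Real.exp (-(a^2/(2*n^2)))) := by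
  have hmeas : Measurable (fun n : ℝ => Real.exp (-(a^2/(2*n^2)))) :=
    Real.measurable_exp.comp ((measurable_const.div ((measurable_id.pow_const 2).const_mul 2)).neg)
  refine (integrable_gaussianPDFReal 0 1).mono
    (((measurable_gaussianPDFReal 0 1).mul hmeas).aestronglyMeasurable)
    (ae_of_all _ fun n => ?_)
  have h1 : 0 ≤ gaussianPDFReal 0 1 n := gaussianPDFReal_nonneg 0 1 n
  have h2 : Real.exp (-(a^2/(2*n^2))) ≤ 1 := by
    rw [Real.exp_le_one_iff]
    have : (0:ℝ) ≤ a^2/(2*n^2) := by positivity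
    linarith
  have h3 : (0:ℝ) < Real.exp (-(a^2/(2*n^2))) := Real.exp_pos _
  rw [Real.norm_eq_abs, Real.norm_eq_abs, abs_of_nonneg (by positivity), abs_of_nonneg h1]
  nlinarith

lemma gauss_laplace {a : ℝ} (ha : 0 < a) :
    ∫⁻ n : ℝ, ENNReal.ofReal (Real.exp (-(a^2/(2*n^2)))) ∂(gaussianReal 0 1)
      = ENNReal.ofReal (Real.exp (-a)) := by
  have hmeas : Measurable (fun n : ℝ => ENNReal.ofReal (Real.exp (-(a^2/(2*n^2))))) :=
    (Real.measurable_exp.comp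
      ((measurable_const.div ((measurable_id.pow_const 2).const_mul 2)).neg)).ennreal_ofReal
  rw [gaussianReal_of_var_ne_zero _ one_ne_zero,
    lintegral_withDensity_eq_lintegral_mul _ (measurable_gaussianPDF 0 1) hmeas]
  have hpt : ∀ n : ℝ, (gaussianPDF 0 1 * fun n => ENNReal.ofReal (Real.exp (-(a^2/(2*n^2))))) n
      = ENNReal.ofReal (gaussianPDFReal 0 1 n * Real.exp (-(a^2/(2*n^2)))) := by
    intro n
    simp only [Pi.mul_apply, gaussianPDF]
    rw [← ENNReal.ofReal_mul (gaussianPDFReal_nonneg 0 1 n)]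
  rw [lintegral_congr hpt,
    ← ofReal_integral_eq_lintegral_ofReal (integrable_gauss_factor ha)
      (ae_of_all _ fun n => mul_nonneg (gaussianPDFReal_nonneg 0 1 n) (Real.exp_pos _).le)]
  congr 1
  have hpt2 : ∀ n : ℝ, gaussianPDFReal 0 1 n * Real.exp (-(a^2/(2*n^2)))
      = (Real.sqrt (2*π))⁻¹ * Real.exp (-(n^2/2) - a^2/(2*n^2)) := by
    intro n
    simp only [gaussianPDFReal, NNReal.coe_one, mul_one, sub_zero]
    rw [mul_assoc, ← Real.exp_add]
    congr 2
    ring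
  rw [funext hpt2, integral_const_mul, key_integral ha]
  have hs : Real.sqrt (2*π) ≠ 0 := by positivity
  field_simp

theorem gumbel_half_add_theta_eq_gumbel_shift
    {Ω : Type*} [MeasurableSpace Ω] (μ : Measure Ω) [IsProbabilityMeasure μ]
    (Z N : Ω → ℝ) (hZmeas : Measurable Z) (hNmeas : Measurable N)
    (hZ : ∀ x : ℝ, μ {ω | Z ω ≤ x} = ENNReal.ofReal (Real.exp (-Real.exp (-x))))
    (hN : μ.map N = gaussianReal 0 1)
    (hindep : IndepFun Z N μ) :
    μ.map (fun ω => Z ω / 2 + (-Real.log |N ω|))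
      = μ.map (fun ω => Z ω + Real.log 2 / 2) := by
  have hmeasL : Measurable (fun ω => Z ω / 2 + (-Real.log |N ω|)) :=
    (hZmeas.div_const 2).add ((Real.measurable_log.comp hNmeas.abs).neg)
  have hmeasR : Measurable (fun ω => Z ω + Real.log 2 / 2) := hZmeas.add_const _
  haveI h1 : IsProbabilityMeasure (μ.map (fun ω => Z ω / 2 + (-Real.log |N ω|))) :=
    Measure.isProbabilityMeasure_map hmeasL.aemeasurable
  haveI h2 : IsProbabilityMeasure (μ.map (fun ω => Z ω + Real.log 2 / 2)) :=
    Measure.isProbabilityMeasure_map hmeasR.aemeasurable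
  haveI h3 : IsProbabilityMeasure (μ.map Z) := Measure.isProbabilityMeasure_map hZmeas.aemeasurable
  refine Measure.ext_of_Iic _ _ (fun x => ?_)
  set a : ℝ := Real.sqrt 2 * Real.exp (-x) with ha_def
  have ha : 0 < a := by positivity
  have hRHS : μ.map (fun ω => Z ω + Real.log 2 / 2) (Iic x)
      = ENNReal.ofReal (Real.exp (-a)) := by
    rw [Measure.map_apply hmeasR measurableSet_Iic]
    have hset : (fun ω => Z ω + Real.log 2 / 2) ⁻¹' (Iic x)
        = {ω | Z ω ≤ x - Real.log 2 / 2} := by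
      ext ω; simp [Set.mem_setOf_eq, le_sub_iff_add_le]
    rw [hset, hZ]
    have hsqrt : Real.exp (Real.log 2 / 2) = Real.sqrt 2 := by
      rw [Real.sqrt_eq_rpow, Real.rpow_def_of_pos (by norm_num : (0:ℝ) < 2)]
      ring_nf
    rw [ha_def, show -(x - Real.log 2 / 2) = Real.log 2 / 2 + (-x) by ring,
      Real.exp_add, hsqrt]
  rw [hRHS]
  have hpair : μ.map (fun ω => (N ω, Z ω)) = (gaussianReal 0 1).prod (μ.map Z) := by
    have h := (indepFun_iff_map_prod_eq_prod_map_map hNmeas.aemeasurable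
      hZmeas.aemeasurable).mp hindep.symm
    rwa [hN] at h
  have hZIic : ∀ y : ℝ, (μ.map Z) (Iic y) = ENNReal.ofReal (Real.exp (-Real.exp (-y))) := by
    intro y; rw [Measure.map_apply hZmeas measurableSet_Iic]; exact hZ y
  rw [Measure.map_apply hmeasL measurableSet_Iic]
  have hfun : Measurable (fun p : ℝ × ℝ => p.2 / 2 + (-Real.log |p.1|)) :=
    (measurable_snd.div_const 2).add ((Real.measurable_log.comp measurable_fst.abs).neg)
  have hSet : (fun ω => Z ω / 2 + (-Real.log |N ω|)) ⁻¹' (Iic x)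
      = (fun ω => (N ω, Z ω)) ⁻¹'
        ((fun p : ℝ × ℝ => p.2 / 2 + (-Real.log |p.1|)) ⁻¹' (Iic x)) := rfl
  rw [hSet, ← Measure.map_apply (hNmeas.prodMk hZmeas) (hfun measurableSet_Iic), hpair,
    Measure.prod_apply (hfun measurableSet_Iic)]
  have hslice : ∀ n : ℝ,
      (Prod.mk n ⁻¹' ((fun p : ℝ × ℝ => p.2 / 2 + (-Real.log |p.1|)) ⁻¹' (Iic x)))
      = Iic (2*(x + Real.log |n|)) := by
    intro n; ext z
    simp only [Set.mem_preimage, Set.mem_Iic]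
    constructor <;> intro h <;> linarith
  refine Eq.trans (lintegral_congr_ae ?_) (gauss_laplace ha)
  have h0 : ∀ᵐ n ∂(gaussianReal 0 1), n ≠ 0 := by
    have hz : gaussianReal 0 1 {(0:ℝ)} = 0 :=
      gaussianReal_absolutelyContinuous 0 one_ne_zero Real.volume_singleton
    rw [ae_iff]
    convert hz using 2
    ext n; simp
  filter_upwards [h0] with n hn
  rw [hslice n, hZIic]
  have hn' : (0:ℝ) < |n| := abs_pos.mpr hn
  have hexp : Real.exp (-(2*(x + Real.log |n|))) = a^2/(2*n^2) := by
    have ha2 : a^2 = 2 * Real.exp (-x)^2 := by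
      rw [ha_def, mul_pow, Real.sq_sqrt (by norm_num : (0:ℝ) ≤ 2)]
    have hlog : Real.exp (-(Real.log |n|)) = |n|⁻¹ := by
      rw [Real.exp_neg, Real.exp_log hn']
    rw [show -(2*(x + Real.log |n|)) = (-x) + ((-x) + (-(Real.log |n|) + -(Real.log |n|))) by ring,
      Real.exp_add, Real.exp_add, Real.exp_add, hlog, ha2, ← sq_abs n]
    ring
  rw [hexp]
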